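/- arXiv:2007.06564 — 5 statements merged into one kernel-verified Lean document; each statement's English description precedes it below -/
import Mathlib

section
/- Lorenz values are superadditive: for probability vectors p and q on Fin d and reals λ₁, λ₂ ≥ 0 with λ₁ + λ₂ = 1, the function λ₁·p + λ₂·q is a probability vector and for every ℓ ∈ Fin d, L(λ₁·p + λ₂·q, ℓ) ≥ λ₁·L(p, ℓ) + λ₂·L(q, ℓ). -/
/-- A probability vector on `Fin d`: nonnegative entries summing to 1. -/
def IsProbVec {d : ℕ} (p : Fin d → ℝ) : Prop :=
  (∀ r, 0 ≤ p r) ∧ ∑ r, p r = 1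

/-- `π` is a sorting permutation for `p`: it arranges the values of `p` in ascending order. -/
def IsSortingPerm {d : ℕ} (p : Fin d → ℝ) (π : Equiv.Perm (Fin d)) : Prop :=
  ∀ k l : Fin d, k ≤ l → p (π k) ≤ p (π l)

/-- The Lorenz values of `p` computed with the sorting permutation `π`:
`L(p, ℓ) = ∑_{k=0}^{ℓ} p (π k)`. -/
def lorenz {d : ℕ} (p : Fin d → ℝ) (π : Equiv.Perm (Fin d)) (ℓ : Fin d) : ℝ :=
  ∑ k ∈ Finset.Iic ℓ, p (π k)

lemma strictMono_fin_le {k d : ℕ} (f : Fin k → Fin d) (hf : StrictMono f) (i : Fin k) :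
    (i : ℕ) ≤ (f i : ℕ) := by
  obtain ⟨v, hv⟩ := i
  induction v with
  | zero => exact Nat.zero_le _
  | succ m ih =>
    have hmk : m < k := by omega
    have h1 : f ⟨m, hmk⟩ < f ⟨m + 1, hv⟩ := hf (by simp [Fin.lt_def])
    have h2 : m ≤ (f ⟨m, hmk⟩ : ℕ) := by simpa using ih hmk
    have h3 : (f ⟨m, hmk⟩ : ℕ) < (f ⟨m + 1, hv⟩ : ℕ) := h1
    show m + 1 ≤ _
    omega

/-- The Lorenz value at `ℓ` is at most the sum of `p` over any set of `ℓ + 1` indices. -/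
lemma lorenz_le_sum {d : ℕ} (p : Fin d → ℝ) (π : Equiv.Perm (Fin d))
    (hπ : IsSortingPerm p π) (ℓ : Fin d) (S : Finset (Fin d))
    (hS : S.card = (ℓ : ℕ) + 1) :
    lorenz p π ℓ ≤ ∑ r ∈ S, p r := by
  classical
  set n := (ℓ : ℕ) + 1 with hn
  set T : Finset (Fin d) := S.image π.symm with hT
  have hTcard : T.card = n := by
    rw [hT, Finset.card_image_of_injective _ π.symm.injective, hS]
  have hsum : ∑ r ∈ S, p r = ∑ k ∈ T, p (π k) := by
    rw [hT, Finset.sum_image (fun x _ y _ h => π.symm.injective h)]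
    simp
  set f := T.orderEmbOfFin hTcard with hf
  have hsum2 : ∑ k ∈ T, p (π k) = ∑ i : Fin n, p (π (f i)) := by
    rw [← Finset.sum_coe_sort T (fun k => p (π k)),
      ← Equiv.sum_comp (T.orderIsoOfFin hTcard).toEquiv (fun x : T => p (π (x : Fin d)))]
    rfl
  have hsum3 : lorenz p π ℓ = ∑ i : Fin n, p (π ⟨(i : ℕ), lt_of_lt_of_le i.2 ℓ.2⟩) := by
    unfold lorenz
    refine (Finset.sum_nbij' (i := fun (i : Fin n) => (⟨(i : ℕ), lt_of_lt_of_le i.2 ℓ.2⟩ : Fin d))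
      (j := fun (k : Fin d) => (⟨min (k : ℕ) ((ℓ:ℕ)), by omega⟩ : Fin n)) ?_ ?_ ?_ ?_ ?_).symm
    · intro i _
      simp only [Finset.mem_Iic]
      exact Fin.mk_le_of_le_val (by have := i.2; omega)
    · intro k hk; exact Finset.mem_univ _
    · intro i _; ext; simp; omega
    · intro k hk
      simp only [Finset.mem_Iic, Fin.le_def] at hk
      ext; simp; omega
    · intro i _; rfl
  rw [hsum, hsum2, hsum3]
  apply Finset.sum_le_sum
  intro i _
  exact hπ _ _ (Fin.mk_le_of_le_val (strictMono_fin_le f f.strictMono i))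

/-- Lorenz values are superadditive: for probability vectors `p` and `q` on `Fin d`
and reals `λ₁, λ₂ ≥ 0` with `λ₁ + λ₂ = 1`, the function `λ₁·p + λ₂·q` is a probability vector and
for every `ℓ ∈ Fin d`, `L(λ₁·p + λ₂·q, ℓ) ≥ λ₁·L(p, ℓ) + λ₂·L(q, ℓ)`
(with the Lorenz values of each vector computed via any sorting permutation for it). -/
theorem lorenz_superadditive {d : ℕ} (hd : 1 ≤ d) (p q : Fin d → ℝ)
    (hp : IsProbVec p) (hq : IsProbVec q)
    (lam₁ lam₂ : ℝ) (h₁ : 0 ≤ lam₁) (h₂ : 0 ≤ lam₂) (hsum : lam₁ + lam₂ = 1)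
    (πp πq πm : Equiv.Perm (Fin d))
    (hπp : IsSortingPerm p πp) (hπq : IsSortingPerm q πq)
    (hπm : IsSortingPerm (fun r => lam₁ * p r + lam₂ * q r) πm) :
    IsProbVec (fun r => lam₁ * p r + lam₂ * q r) ∧
    ∀ ℓ : Fin d,
      lorenz (fun r => lam₁ * p r + lam₂ * q r) πm ℓ ≥
        lam₁ * lorenz p πp ℓ + lam₂ * lorenz q πq ℓ := by
  classical
  constructor
  · constructor
    · intro r
      exact add_nonneg (mul_nonneg h₁ (hp.1 r)) (mul_nonneg h₂ (hq.1 r))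
    · rw [Finset.sum_add_distrib, ← Finset.mul_sum, ← Finset.mul_sum, hp.2, hq.2,
        mul_one, mul_one, hsum]
  · intro ℓ
    set S : Finset (Fin d) := (Finset.Iic ℓ).image πm with hSdef
    have hScard : S.card = (ℓ : ℕ) + 1 := by
      rw [hSdef, Finset.card_image_of_injective _ πm.injective, Fin.card_Iic]
    have hsplit : lorenz (fun r => lam₁ * p r + lam₂ * q r) πm ℓ =
        lam₁ * (∑ r ∈ S, p r) + lam₂ * (∑ r ∈ S, q r) := by
      unfold lorenz
      rw [hSdef, Finset.sum_image (fun x _ y _ h => πm.injective h),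
        Finset.sum_image (fun x _ y _ h => πm.injective h),
        Finset.mul_sum, Finset.mul_sum, ← Finset.sum_add_distrib]
    rw [hsplit]
    have h1 := lorenz_le_sum p πp hπp ℓ S hScard
    have h2 := lorenz_le_sum q πq hπq ℓ S hScard
    exact add_le_add (mul_le_mul_of_nonneg_left h1 h₁) (mul_le_mul_of_nonneg_left h2 h₂)
end

section
/- For every probability vector p on Fin d, the Gini index satisfies 0 ≤ G(p) ≤ (d − 1)/(d + 1). -/
/-- The Gini index of `p`, computed with the sorting permutation `π`:
`G(p) = 1 − (2/(d+1)) · ∑_{ℓ=0}^{d−1} L(p, ℓ)`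
(independent of the choice of sorting permutation). -/
noncomputable def gini {d : ℕ} (p : Fin d → ℝ) (π : Equiv.Perm (Fin d)) : ℝ :=
  1 - (2 / ((d : ℝ) + 1)) * ∑ ℓ : Fin d, lorenz p π ℓ

/-- For every probability vector `p` on `Fin d`, the Gini index satisfies
`0 ≤ G(p) ≤ (d − 1)/(d + 1)`. -/
theorem gini_nonneg_and_le {d : ℕ} (hd : 1 ≤ d) (p : Fin d → ℝ) (hp : IsProbVec p)
    (π : Equiv.Perm (Fin d)) (hπ : IsSortingPerm p π) :
    0 ≤ gini p π ∧ gini p π ≤ ((d : ℝ) - 1) / ((d : ℝ) + 1) := by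
  obtain ⟨hnn, hsum⟩ := hp
  set q : Fin d → ℝ := fun k => p (π k) with hq
  have hqsum : ∑ k, q k = 1 := by
    show (∑ k, p (π k)) = 1
    rw [Equiv.sum_comp π p]; exact hsum
  have hdpos : (0:ℝ) < (d:ℝ) + 1 := by positivity
  set S : ℝ := ∑ ℓ : Fin d, lorenz p π ℓ with hS
  have hswap : S = ∑ k : Fin d, ((d:ℝ) - (k:ℕ)) * q k := by
    rw [hS]
    simp only [lorenz]
    rw [Finset.sum_comm' (s := Finset.univ) (t := fun ℓ : Fin d => Finset.Iic ℓ)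
      (s' := fun k : Fin d => Finset.Ici k) (t' := Finset.univ)
      (f := fun _ k => q k) (by intro ℓ k; simp [Finset.mem_Iic, Finset.mem_Ici])]
    refine Finset.sum_congr rfl fun k _ => ?_
    rw [Finset.sum_const, Fin.card_Ici, nsmul_eq_mul, Nat.cast_sub (le_of_lt k.isLt)]
  have hlast : lorenz p π ⟨d - 1, by omega⟩ = 1 := by
    have he : Finset.Iic (⟨d - 1, by omega⟩ : Fin d) = Finset.univ := by
      ext k; simp [Finset.mem_Iic, Fin.le_def]; omega
    rw [lorenz, he]
    show (∑ k, p (π k)) = 1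
    rw [Equiv.sum_comp π p]; exact hsum
  have hlnn : ∀ ℓ : Fin d, 0 ≤ lorenz p π ℓ := fun ℓ =>
    Finset.sum_nonneg fun k _ => hnn _
  have hS1 : 1 ≤ S := by
    rw [← hlast]
    exact Finset.single_le_sum (fun ℓ _ => hlnn ℓ) (Finset.mem_univ _)
  have hanti : Antivary (fun k : Fin d => (d:ℝ) - (k:ℕ)) q := by
    intro i j hij
    have hji : ¬ (j ≤ i) := fun h => absurd (hπ j i h) (not_le.mpr hij)
    have h1 : (i:ℕ) ≤ (j:ℕ) := by omega
    have h2 : ((i:ℕ):ℝ) ≤ ((j:ℕ):ℝ) := by exact_mod_cast h1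
    simp only
    linarith
  have hcheb := hanti.card_mul_sum_le_sum_mul_sum
  have hgauss : (∑ i ∈ Finset.range d, (i:ℝ)) * 2 = (d:ℝ) * ((d:ℝ) - 1) := by
    have h := congrArg (Nat.cast : ℕ → ℝ) (Finset.sum_range_id_mul_two d)
    push_cast [Nat.cast_sub hd] at h
    exact h
  have hfsum : ∑ k : Fin d, ((d:ℝ) - (k:ℕ)) = (d:ℝ) * ((d:ℝ) + 1) / 2 := by
    rw [Fin.sum_univ_eq_sum_range (fun i => (d:ℝ) - (i:ℕ)) d, Finset.sum_sub_distrib,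
      Finset.sum_const, Finset.card_range, nsmul_eq_mul]
    field_simp
    linear_combination -hgauss
  rw [Fintype.card_fin, hfsum, hqsum, mul_one] at hcheb
  have hd' : (0:ℝ) < d := by exact_mod_cast hd
  have hS2 : S ≤ ((d:ℝ) + 1) / 2 := by
    rw [hswap]
    nlinarith [hcheb]
  constructor
  · rw [gini, ← hS]
    have h3 : (2 / ((d:ℝ)+1)) * S ≤ 1 := by
      rw [div_mul_eq_mul_div, div_le_one hdpos]; linarith
    linarith
  · rw [gini, ← hS]
    have h1 : (2 / ((d:ℝ)+1)) * 1 ≤ (2 / ((d:ℝ)+1)) * S :=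
      mul_le_mul_of_nonneg_left hS1 (by positivity)
    rw [mul_one] at h1
    have h2 : ((d:ℝ)-1)/((d:ℝ)+1) = 1 - 2/((d:ℝ)+1) := by
      field_simp
      ring
    rw [h2]
    linarith
end

section
/- For a probability vector p on Fin d, G(p) = (d − 1)/(d + 1) if and only if there exists a ∈ Fin d such that p r = 1 when r = a and p r = 0 otherwise. -/
lemma sum_lorenz_eq {d : ℕ} (p : Fin d → ℝ) (π : Equiv.Perm (Fin d)) :
    ∑ ℓ : Fin d, (∑ k ∈ Finset.Iic ℓ, p (π k)) = ∑ k : Fin d, ((d : ℝ) - k) * p (π k) := by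
  rw [Finset.sum_comm' (t' := Finset.univ) (s' := fun k => Finset.Ici k)]
  · simp [Finset.sum_const, Fin.card_Ici, mul_comm]
  · simp [Finset.mem_Iic, Finset.mem_Ici]


/-- For a probability vector `p` on `Fin d`, `G(p) = (d − 1)/(d + 1)` if and only if
there exists `a ∈ Fin d` such that `p r = 1` when `r = a` and `p r = 0` otherwise. -/
theorem gini_eq_max_iff_point_mass {d : ℕ} (hd : 1 ≤ d) (p : Fin d → ℝ) (hp : IsProbVec p)
    (π : Equiv.Perm (Fin d)) (hπ : IsSortingPerm p π) :
    gini p π = ((d : ℝ) - 1) / ((d : ℝ) + 1) ↔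
      ∃ a : Fin d, ∀ r : Fin d, p r = if r = a then 1 else 0 := by
  obtain ⟨hpos, hsum⟩ := hp
  unfold gini lorenz
  have hd1 : (0:ℝ) < (d:ℝ) + 1 := by positivity
  rw [sum_lorenz_eq]
  have hsumπ : ∑ k : Fin d, p (π k) = 1 := by
    rw [Equiv.sum_comp π p]; exact hsum
  have hiff : (1 - (2 / ((d : ℝ) + 1)) * ∑ k : Fin d, ((d : ℝ) - k) * p (π k))
      = ((d : ℝ) - 1) / ((d : ℝ) + 1) ↔ ∑ k : Fin d, ((d : ℝ) - k) * p (π k) = 1 := by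
    rw [div_mul_eq_mul_div, sub_eq_iff_eq_add, ← add_div, eq_div_iff hd1.ne']
    constructor
    · intro h; nlinarith
    · intro h; rw [h]; ring
  rw [hiff]
  set last : Fin d := ⟨d - 1, by omega⟩ with hlastdef
  constructor
  · intro hS
    have hzero : ∑ k : Fin d, (((d : ℝ) - k) - 1) * p (π k) = 0 := by
      have h1 : ∑ k : Fin d, (((d : ℝ) - k) - 1) * p (π k)
          = (∑ k : Fin d, ((d : ℝ) - k) * p (π k)) - ∑ k : Fin d, p (π k) := by
        rw [← Finset.sum_sub_distrib]; apply Finset.sum_congr rfl; intro k _; ring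
      rw [h1, hS, hsumπ]; ring
    have hterm : ∀ k : Fin d, (((d : ℝ) - k) - 1) * p (π k) = 0 := fun k =>
      (Finset.sum_eq_zero_iff_of_nonneg (fun j _ => by
        have hj : ((j : Fin d) : ℕ) + 1 ≤ d := j.is_lt
        have hj' : ((j : ℕ) : ℝ) + 1 ≤ (d : ℝ) := by exact_mod_cast hj
        exact mul_nonneg (by linarith) (hpos _))).mp hzero k (Finset.mem_univ k)
    have hzerok : ∀ k : Fin d, k ≠ last → p (π k) = 0 := by
      intro k hk
      have hklt : (k : ℕ) + 1 < d := by
        have h1 := k.is_lt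
        have h2 : (k:ℕ) ≠ d - 1 := fun h => hk (Fin.ext h)
        omega
      have hcast : ((k : ℕ) : ℝ) + 1 < (d : ℝ) := by exact_mod_cast hklt
      have hcoef : ((d : ℝ) - k) - 1 ≠ 0 := by
        have : (0:ℝ) < ((d : ℝ) - k) - 1 := by linarith
        exact this.ne'
      exact (mul_eq_zero.mp (hterm k)).resolve_left hcoef
    have hplast : p (π last) = 1 := by
      have h1 := Finset.sum_eq_single_of_mem last (Finset.mem_univ last)
        (fun k _ hk => hzerok k hk)
      rw [h1] at hsumπ; exact hsumπ
    refine ⟨π last, fun r => ?_⟩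
    by_cases hr : r = π last
    · simp [hr, hplast]
    · simp only [hr, if_false]
      have h2 : π.symm r ≠ last := by
        intro h; apply hr; rw [← h]; simp
      have := hzerok (π.symm r) h2
      simpa using this
  · rintro ⟨a, ha⟩
    have hπlast : π last = a := by
      by_contra h
      have hle : p (π (π.symm a)) ≤ p (π last) := by
        apply hπ
        have h1 : ((π.symm a : Fin d) : ℕ) ≤ d - 1 := Nat.le_sub_one_of_lt (π.symm a).is_lt
        exact h1
      rw [Equiv.apply_symm_apply] at hle
      rw [ha a, ha (π last)] at hle
      simp [h] at hle
      linarith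
    have hval : ∀ k : Fin d, p (π k) = if k = last then 1 else 0 := by
      intro k
      by_cases hk : k = last
      · simp [hk, hπlast, ha]
      · simp only [hk, if_false]
        rw [ha]
        have h3 : π k ≠ a := by
          intro h; apply hk; rw [← hπlast] at h; exact π.injective h
        simp [h3]
    rw [Finset.sum_congr rfl (fun k _ => by rw [hval k])]
    simp only [mul_ite, mul_one, mul_zero]
    rw [Finset.sum_ite_eq' Finset.univ last (fun k => (d:ℝ) - k)]
    simp only [Finset.mem_univ, if_true, hlastdef]
    have hc : (((d - 1 : ℕ)) : ℝ) = (d : ℝ) - 1 := by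
      push_cast [Nat.cast_sub hd]; ring
    rw [hc]; ring
end

section
/- The Gini index is subadditive: for probability vectors p and q on Fin d and reals λ₁, λ₂ ≥ 0 with λ₁ + λ₂ = 1, G(λ₁·p + λ₂·q) ≤ λ₁·G(p) + λ₂·G(q). -/
/-- The sorted partial sum is a minimum over all sets of the same cardinality. -/
lemma sorted_partial_min {d : ℕ} (p : Fin d → ℝ) (π : Equiv.Perm (Fin d))
    (hπ : IsSortingPerm p π) (ℓ : Fin d) (S : Finset (Fin d))
    (hS : S.card = (Finset.Iic ℓ).card) :
    ∑ k ∈ Finset.Iic ℓ, p (π k) ≤ ∑ r ∈ S, p r := by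
  set A : Finset (Fin d) := (Finset.Iic ℓ).image π with hA
  have hinj : Function.Injective π := π.injective
  have hcardA : A.card = (Finset.Iic ℓ).card := Finset.card_image_of_injective _ hinj
  have hsumA : ∑ k ∈ Finset.Iic ℓ, p (π k) = ∑ r ∈ A, p r :=
    (Finset.sum_image (fun a _ b _ h => hinj h)).symm
  rw [hsumA]
  -- bound elements
  have hAle : ∀ r ∈ A \ S, p r ≤ p (π ℓ) := by
    intro r hr
    obtain ⟨k, hk, rfl⟩ := Finset.mem_image.mp (Finset.mem_sdiff.mp hr).1
    exact hπ k ℓ (Finset.mem_Iic.mp hk)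
  have hSge : ∀ r ∈ S \ A, p (π ℓ) ≤ p r := by
    intro r hr
    have hrA : r ∉ A := (Finset.mem_sdiff.mp hr).2
    have hk : ¬ (π.symm r ≤ ℓ) := by
      intro h
      exact hrA (Finset.mem_image.mpr ⟨π.symm r, Finset.mem_Iic.mpr h, π.apply_symm_apply r⟩)
    have := hπ ℓ (π.symm r) (le_of_not_ge hk)
    rwa [π.apply_symm_apply] at this
  have hcard : (A \ S).card = (S \ A).card :=
    Finset.card_sdiff_comm (hcardA.trans hS.symm)
  have h1 : ∑ r ∈ A \ S, p r ≤ (A \ S).card • p (π ℓ) :=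
    Finset.sum_le_card_nsmul _ _ _ hAle
  have h2 : (S \ A).card • p (π ℓ) ≤ ∑ r ∈ S \ A, p r :=
    Finset.card_nsmul_le_sum _ _ _ hSge
  have key : ∑ r ∈ A \ S, p r ≤ ∑ r ∈ S \ A, p r := by
    calc ∑ r ∈ A \ S, p r ≤ (A \ S).card • p (π ℓ) := h1
      _ = (S \ A).card • p (π ℓ) := by rw [hcard]
      _ ≤ ∑ r ∈ S \ A, p r := h2
  have hA2 : ∑ r ∈ A \ (A ∩ S), p r + ∑ r ∈ A ∩ S, p r = ∑ r ∈ A, p r :=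
    Finset.sum_sdiff Finset.inter_subset_left
  have hS2 : ∑ r ∈ S \ (S ∩ A), p r + ∑ r ∈ S ∩ A, p r = ∑ r ∈ S, p r :=
    Finset.sum_sdiff Finset.inter_subset_left
  rw [Finset.sdiff_inter_self_left] at hA2 hS2
  rw [← hA2, ← hS2, Finset.inter_comm]
  exact add_le_add_left key _

/-- The Gini index is subadditive: for probability vectors `p` and `q` on `Fin d`
and reals `λ₁, λ₂ ≥ 0` with `λ₁ + λ₂ = 1`, `G(λ₁·p + λ₂·q) ≤ λ₁·G(p) + λ₂·G(q)`
(with the Gini index of each vector computed via any sorting permutation for it). -/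
theorem gini_subadditive {d : ℕ} (hd : 1 ≤ d) (p q : Fin d → ℝ)
    (hp : IsProbVec p) (hq : IsProbVec q)
    (lam₁ lam₂ : ℝ) (h₁ : 0 ≤ lam₁) (h₂ : 0 ≤ lam₂) (hsum : lam₁ + lam₂ = 1)
    (πp πq πm : Equiv.Perm (Fin d))
    (hπp : IsSortingPerm p πp) (hπq : IsSortingPerm q πq)
    (hπm : IsSortingPerm (fun r => lam₁ * p r + lam₂ * q r) πm) :
    gini (fun r => lam₁ * p r + lam₂ * q r) πm ≤ lam₁ * gini p πp + lam₂ * gini q πq := by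
  have hL : ∀ ℓ : Fin d, lam₁ * lorenz p πp ℓ + lam₂ * lorenz q πq ℓ ≤
      lorenz (fun r => lam₁ * p r + lam₂ * q r) πm ℓ := by
    intro ℓ
    have hcard : ((Finset.Iic ℓ).image πm).card = (Finset.Iic ℓ).card :=
      Finset.card_image_of_injective _ πm.injective
    have hip : lorenz p πp ℓ ≤ ∑ k ∈ Finset.Iic ℓ, p (πm k) := by
      have := sorted_partial_min p πp hπp ℓ ((Finset.Iic ℓ).image πm) hcard
      rwa [Finset.sum_image (fun a _ b _ h => πm.injective h)] at this
    have hiq : lorenz q πq ℓ ≤ ∑ k ∈ Finset.Iic ℓ, q (πm k) := by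
      have := sorted_partial_min q πq hπq ℓ ((Finset.Iic ℓ).image πm) hcard
      rwa [Finset.sum_image (fun a _ b _ h => πm.injective h)] at this
    have : lorenz (fun r => lam₁ * p r + lam₂ * q r) πm ℓ =
        lam₁ * ∑ k ∈ Finset.Iic ℓ, p (πm k) + lam₂ * ∑ k ∈ Finset.Iic ℓ, q (πm k) := by
      simp [lorenz, Finset.sum_add_distrib, Finset.mul_sum]
    rw [this]
    exact add_le_add (mul_le_mul_of_nonneg_left hip h₁) (mul_le_mul_of_nonneg_left hiq h₂)
  have hc : (0:ℝ) ≤ 2 / ((d : ℝ) + 1) := by positivity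
  have hsumL : lam₁ * ∑ ℓ : Fin d, lorenz p πp ℓ + lam₂ * ∑ ℓ : Fin d, lorenz q πq ℓ ≤
      ∑ ℓ : Fin d, lorenz (fun r => lam₁ * p r + lam₂ * q r) πm ℓ := by
    rw [Finset.mul_sum, Finset.mul_sum, ← Finset.sum_add_distrib]
    exact Finset.sum_le_sum fun ℓ _ => hL ℓ
  simp only [gini]
  nlinarith [mul_le_mul_of_nonneg_left hsumL hc]
end

section
/- The Gini index is additive on comonotonic probability vectors: if probability vectors p and q on Fin d admit a common sorting permutation π, then for all reals λ₁, λ₂ ≥ 0 with λ₁ + λ₂ = 1, G(λ₁·p + λ₂·q) = λ₁·G(p) + λ₂·G(q). -/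
lemma sorting_eq {d : ℕ} {p : Fin d → ℝ} {π σ : Equiv.Perm (Fin d)}
    (hπ : IsSortingPerm p π) (hσ : IsSortingPerm p σ) : p ∘ π = p ∘ σ :=
  Tuple.unique_monotone (fun _ _ h => hπ _ _ h) (fun _ _ h => hσ _ _ h)

lemma gini_eq {d : ℕ} {p : Fin d → ℝ} {π σ : Equiv.Perm (Fin d)}
    (hπ : IsSortingPerm p π) (hσ : IsSortingPerm p σ) : gini p π = gini p σ := by
  have h := sorting_eq hπ hσ
  unfold gini lorenz
  congr 2
  refine Finset.sum_congr rfl fun ℓ _ => Finset.sum_congr rfl fun k _ => ?_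
  exact congrFun h k

/-- The Gini index is additive on comonotonic probability vectors: if probability
vectors `p` and `q` on `Fin d` admit a common sorting permutation `π`, then for all reals
`λ₁, λ₂ ≥ 0` with `λ₁ + λ₂ = 1`, `G(λ₁·p + λ₂·q) = λ₁·G(p) + λ₂·G(q)`
(with the Gini index of the mixture computed via any sorting permutation for it). -/
theorem gini_additive_of_comonotonic {d : ℕ} (hd : 1 ≤ d) (p q : Fin d → ℝ)
    (hp : IsProbVec p) (hq : IsProbVec q)
    (π : Equiv.Perm (Fin d)) (hπp : IsSortingPerm p π) (hπq : IsSortingPerm q π)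
    (lam₁ lam₂ : ℝ) (h₁ : 0 ≤ lam₁) (h₂ : 0 ≤ lam₂) (hsum : lam₁ + lam₂ = 1)
    (πm : Equiv.Perm (Fin d)) (hπm : IsSortingPerm (fun r => lam₁ * p r + lam₂ * q r) πm) :
    gini (fun r => lam₁ * p r + lam₂ * q r) πm = lam₁ * gini p π + lam₂ * gini q π := by
  have hπmix : IsSortingPerm (fun r => lam₁ * p r + lam₂ * q r) π := fun k l h =>
    add_le_add (mul_le_mul_of_nonneg_left (hπp k l h) h₁)
      (mul_le_mul_of_nonneg_left (hπq k l h) h₂)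
  rw [gini_eq hπm hπmix]
  have hS : ∑ ℓ : Fin d, lorenz (fun r => lam₁ * p r + lam₂ * q r) π ℓ
      = lam₁ * ∑ ℓ : Fin d, lorenz p π ℓ + lam₂ * ∑ ℓ : Fin d, lorenz q π ℓ := by
    simp [lorenz, Finset.sum_add_distrib, Finset.mul_sum]
  unfold gini
  rw [hS]
  linear_combination (-(1:ℝ)) * hsum
end
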